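/- arXiv:2603.07104 — 3 statements merged into one kernel-verified Lean document; each statement's English description precedes it below -/
import Mathlib

section
/- For any real number θ > 0 and integers m ≥ 2 and 1 ≤ j ≤ m−1, one has ∑_{n=j}^{m} (−1)^{n−j} (θ + 2n − 1)/(n−j)! · (θ+j)^{(n−1)} = (−1)^{m−j} (θ+j)^{(m)}/(m−j)!, where w^{(k)} := w(w+1)⋯(w+k−1) denotes the rising factorial (with w^{(0)} := 1). -/
open MeasureTheory ProbabilityTheory Filter
open scoped ENNReal Classical

noncomputable section

variable {X : Type*} [MeasurableSpace X]

/-- The measure `μ^[n]` on `X^n`, defined recursively by adding Dirac masses. -/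
def seqM (μ : Measure X) : (n : ℕ) → Measure (Fin n → X)
  | 0 => Measure.dirac (fun i => i.elim0)
  | n + 1 => (seqM μ n).bind
      (fun x => (μ + ∑ i, Measure.dirac (x i)).map (Fin.snoc x))

/-- The rising factorial `w^{(n)} = w (w+1) ⋯ (w+n-1)`. -/
def risingFac (w : ℝ) (n : ℕ) : ℝ := ∏ i ∈ Finset.range n, (w + i)

/-- The Dirichlet distribution, realized as the law of normalized independent
Gamma random variables (with the convention `Gamma(0) = δ₀`). -/
def dirichletLaw {k : ℕ} (α : Fin k → ℝ) : Measure (Fin k → ℝ) :=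
  (Measure.pi (fun i => if 0 < α i then gammaMeasure (α i) 1 else Measure.dirac 0)).map
    (fun y i => y i / ∑ j, y j)

/-- `Q` is the law of a Dirichlet–Ferguson process with parameter measure `ρ`. -/
def IsDFLaw (ρ : Measure X) (Q : Measure (Measure X)) : Prop :=
  IsProbabilityMeasure Q ∧ (∀ᵐ μ ∂Q, IsProbabilityMeasure μ) ∧
    ∀ (k : ℕ) (B : Fin k → Set X), (∀ i, MeasurableSet (B i)) →
      Pairwise (Function.onFun Disjoint B) → (⋃ i, B i) = Set.univ →
      Q.map (fun μ i => (μ (B i)).toReal) = dirichletLaw (fun i => (ρ (B i)).toReal)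

/-- `ζ` is a Dirichlet–Ferguson process with parameter measure `ρ` on `(Ω, P)`. -/
def IsDF {Ω : Type*} [MeasurableSpace Ω] (ρ : Measure X) (P : Measure Ω)
    (ζ : Ω → Measure X) : Prop :=
  Measurable ζ ∧ IsDFLaw ρ (P.map ζ)

/-- The Campbell measure of the random measure `ζ`. -/
def campbell {Ω : Type*} [MeasurableSpace Ω] (P : Measure Ω) (ζ : Ω → Measure X) :
    Measure (Ω × X) :=
  P.bind (fun ω => (ζ ω).map (fun x => (ω, x)))

/-- The space `H_n` of symmetric, conditionally centered functions in `L²(ρ^[n])`. -/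
def memH (ρ : Measure X) : (n : ℕ) → ((Fin n → X) → ℝ) → Prop
  | 0, g => MemLp g 2 (seqM ρ 0)
  | n + 1, g => MemLp g 2 (seqM ρ (n + 1)) ∧
      (∀ π : Equiv.Perm (Fin (n + 1)),
        (fun x => g (x ∘ π)) =ᵐ[seqM ρ (n + 1)] g) ∧
      ∀ᵐ x ∂ seqM ρ n,
        ∫ t, g (Fin.snoc x t) ∂(ρ + ∑ i, Measure.dirac (x i)) = 0

/-- The multiple integral `ζⁿ(f)(ω) = ∫ f d(ζ ω)ⁿ`. -/
def chaosI {Ω : Type*} [MeasurableSpace Ω] (ζ : Ω → Measure X) (n : ℕ)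
    (f : (Fin n → X) → ℝ) (ω : Ω) : ℝ :=
  ∫ z, f z ∂ Measure.pi (fun _ : Fin n => ζ ω)

/-- The total mass `θ = ρ(X)` as a real number. -/
def θr (ρ : Measure X) : ℝ := (ρ Set.univ).toReal

/-- `(θ+n-1) n n!/θ^{(2n)}` at chaos level `n+1`. -/
def gradDomCoeff (ρ : Measure X) (n : ℕ) : ℝ :=
  (θr ρ + n) * ((n : ℝ) + 1) * (Nat.factorial (n + 1) : ℝ) /
    risingFac (θr ρ) (2 * (n + 1))

/-- `F ∈ dom(∇)`, expressed in terms of its chaos kernels `f`. -/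
def InDomGrad (ρ : Measure X) (f : (n : ℕ) → (Fin (n + 1) → X) → ℝ) : Prop :=
  Summable fun n => gradDomCoeff ρ n * ∫ z, (f n z) ^ 2 ∂ seqM ρ (n + 1)

/-- Partial sums of the Malliavin gradient series. -/
def gradPartial {Ω : Type*} [MeasurableSpace Ω] (ζ : Ω → Measure X)
    (f : (n : ℕ) → (Fin (n + 1) → X) → ℝ) (N : ℕ) (p : Ω × X) : ℝ :=
  ∑ n ∈ Finset.range N, ((n : ℝ) + 1) *
    ((∫ y, f n (Fin.cons p.2 y) ∂ Measure.pi (fun _ : Fin n => ζ p.1)) -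
      chaosI ζ (n + 1) (f n) p.1)

/-- `G` is the Malliavin gradient of the functional with chaos kernels `f`:
the gradient series converges to `G` in `L²(C_ζ)`. -/
def HasGradient {Ω : Type*} [MeasurableSpace Ω] (P : Measure Ω) (ζ : Ω → Measure X)
    (f : (n : ℕ) → (Fin (n + 1) → X) → ℝ) (G : Ω × X → ℝ) : Prop :=
  Tendsto (fun N => eLpNorm (fun p => G p - gradPartial ζ f N p) 2 (campbell P ζ))
    atTop (nhds 0)

/-- `F = c₀ + ∑_{n≥1} ζⁿ(fₙ)` with convergence in `L²(P)`. -/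
def IsChaosExp {Ω : Type*} [MeasurableSpace Ω] (P : Measure Ω) (ζ : Ω → Measure X)
    (c₀ : ℝ) (f : (n : ℕ) → (Fin (n + 1) → X) → ℝ) (F : Ω → ℝ) : Prop :=
  Tendsto (fun N => eLpNorm
    (fun ω => F ω - c₀ - ∑ n ∈ Finset.range N, chaosI ζ (n + 1) (f n) ω) 2 P)
    atTop (nhds 0)

/-- `F ∈ dom(L)`, expressed in terms of its chaos kernels `f`. -/
def InDomL (ρ : Measure X) (f : (n : ℕ) → (Fin (n + 1) → X) → ℝ) : Prop :=
  Summable fun n : ℕ => ((θr ρ + (n : ℝ)) ^ 2 * ((n : ℝ) + 1) ^ 2 * (Nat.factorial (n + 1) : ℝ) /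
      risingFac (θr ρ) (2 * (n + 1))) * ∫ z, (f n z) ^ 2 ∂ seqM ρ (n + 1)

end
theorem statement0 (θ : ℝ) (hθ : 0 < θ) (m j : ℕ) (hm : 2 ≤ m) (hj : 1 ≤ j)
    (hjm : j ≤ m - 1) :
    ∑ n ∈ Finset.Icc j m,
        (-1 : ℝ) ^ (n - j) * ((θ + 2 * (n : ℝ) - 1) / (Nat.factorial (n - j) : ℝ)) *
          risingFac (θ + (j : ℝ)) (n - 1)
      = (-1 : ℝ) ^ (m - j) * risingFac (θ + (j : ℝ)) m / (Nat.factorial (m - j) : ℝ) := by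
  have hjm' : j ≤ m := hjm.trans (Nat.sub_le m 1)
  clear hm hjm hθ
  induction m, hjm' using Nat.le_induction with
  | base =>
    obtain ⟨k, rfl⟩ : ∃ k, j = k + 1 := ⟨j - 1, (Nat.succ_pred_eq_of_pos hj).symm⟩
    simp only [Finset.Icc_self, Finset.sum_singleton, Nat.sub_self, pow_zero,
      Nat.factorial_zero, Nat.add_sub_cancel, Nat.cast_one]
    have : risingFac (θ + (↑(k + 1) : ℝ)) (k + 1)
        = risingFac (θ + (↑(k + 1) : ℝ)) k * (θ + (↑(k + 1) : ℝ) + k) := by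
      simp [risingFac, Finset.prod_range_succ]
    rw [this]
    push_cast
    ring
  | succ m hm ih =>
    rw [Finset.sum_Icc_succ_top (Nat.le_succ_of_le hm), ih]
    obtain ⟨d, rfl⟩ : ∃ d, m = j + d := ⟨m - j, (Nat.add_sub_cancel' hm).symm⟩
    have h1 : j + d + 1 - j = d + 1 := by omega
    have h2 : j + d - j = d := by omega
    have h3 : j + d + 1 - 1 = j + d := by omega
    rw [h1, h2, h3]
    have h4 : risingFac (θ + (j : ℝ)) (j + d + 1)
        = risingFac (θ + (j : ℝ)) (j + d) * (θ + (j : ℝ) + (j + d : ℕ)) := by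
      simp [risingFac, Finset.prod_range_succ]
    rw [h4, Nat.factorial_succ, pow_succ]
    have hf : ((d.factorial : ℝ)) ≠ 0 := Nat.cast_ne_zero.mpr d.factorial_ne_zero
    have hf2 : ((d : ℝ) + 1) ≠ 0 := by positivity
    push_cast
    field_simp
    ring
end

section
/- Let μ be a finite measure on a measurable space X, and for n ∈ ℕ define the measure μ^[n] on X^n by μ^[n](B) = ∫⋯∫ 1_B(x₁,…,xₙ) (μ+δ_{x₁}+⋯+δ_{x_{n−1}})(dxₙ) ⋯ (μ+δ_{x₁})(dx₂) μ(dx₁). Then for every measurable set B ⊆ X, μ^[n](Bⁿ) = μ(B)(μ(B)+1)⋯(μ(B)+n−1), i.e., the n-th rising factorial of μ(B). -/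
open MeasureTheory ProbabilityTheory Filter
open scoped ENNReal Classical

namespace StatementAux

lemma measurable_snoc2 {X : Type*} [MeasurableSpace X] (n : ℕ) :
    Measurable (fun p : (Fin n → X) × X => Fin.snoc p.1 p.2 : _ → Fin (n+1) → X) := by
  rw [measurable_pi_iff]
  intro i
  induction i using Fin.lastCases with
  | last => simpa [Fin.snoc_last] using measurable_snd
  | cast i => simpa [Fin.snoc_castSucc] using (measurable_fst.eval : Measurable fun p : (Fin n → X) × X => p.1 i)

lemma measurable_kernel {X : Type*} [MeasurableSpace X] (μ : Measure X)
    [MeasureTheory.IsFiniteMeasure μ] (n : ℕ) :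
    Measurable (fun x : Fin n → X =>
      (μ + ∑ i, Measure.dirac (x i)).map (Fin.snoc (α := fun _ => X) x)) := by
  apply Measure.measurable_of_measurable_coe
  intro s hs
  have hsnoc : ∀ x : Fin n → X, Measurable (Fin.snoc (α := fun _ => X) x) :=
    fun x => (measurable_snoc2 n).comp (measurable_prodMk_left)
  have heq : ∀ x : Fin n → X,
      (μ + ∑ i, Measure.dirac (x i)).map (Fin.snoc (α := fun _ => X) x) s
        = (∫⁻ t, s.indicator 1 (Fin.snoc x t) ∂μ) +
          ∑ i, s.indicator 1 (Fin.snoc x (x i)) := by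
    intro x
    rw [Measure.map_apply (hsnoc x) hs]
    simp only [Measure.add_apply, Measure.finset_sum_apply]
    congr 1
    · rw [← lintegral_indicator_one ((hsnoc x) hs)]
      rfl
    · refine Finset.sum_congr rfl fun i _ => ?_
      rw [Measure.dirac_apply' _ ((hsnoc x) hs)]
      rfl
  simp only [heq]
  apply Measurable.add
  · exact Measurable.lintegral_prod_right'
      (f := fun p : (Fin n → X) × X => s.indicator 1 (Fin.snoc p.1 p.2))
      ((measurable_one.indicator hs).comp (measurable_snoc2 n))
  · apply Finset.measurable_sum
    intro i _
    exact (measurable_one.indicator hs).comp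
      ((measurable_snoc2 n).comp (measurable_id.prodMk (measurable_pi_apply i)))

end StatementAux

theorem statement1 {X : Type*} [MeasurableSpace X] (μ : MeasureTheory.Measure X)
    [MeasureTheory.IsFiniteMeasure μ] (n : ℕ) (B : Set X) (hB : MeasurableSet B) :
    seqM μ n {x | ∀ i, x i ∈ B} = ∏ i ∈ Finset.range n, (μ B + i) := by
  induction n with
  | zero =>
    rw [show seqM μ 0 = Measure.dirac (fun i => i.elim0) from rfl,
      Measure.dirac_apply_of_mem
        (s := {x : Fin 0 → X | ∀ i, x i ∈ B}) (a := fun i => i.elim0)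
        (by intro i; exact i.elim0), Finset.prod_range_zero]
  | succ n ih =>
    have hSm : ∀ m : ℕ, MeasurableSet {x : Fin m → X | ∀ i, x i ∈ B} := by
      intro m
      have : {x : Fin m → X | ∀ i, x i ∈ B} = ⋂ i, (fun x => x i) ⁻¹' B := by
        ext x; simp
      rw [this]
      exact MeasurableSet.iInter fun i => (measurable_pi_apply i) hB
    rw [seqM, Measure.bind_apply (hSm (n+1)) (StatementAux.measurable_kernel μ n).aemeasurable]
    have hsnoc : ∀ x : Fin n → X, Measurable (Fin.snoc (α := fun _ => X) x) :=
      fun x => (StatementAux.measurable_snoc2 n).comp (measurable_prodMk_left)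
    have hpre : ∀ x : Fin n → X,
        (Fin.snoc (α := fun _ => X) x) ⁻¹' {y | ∀ i, y i ∈ B}
          = if (∀ i, x i ∈ B) then B else ∅ := by
      intro x
      ext t
      by_cases h : ∀ i, x i ∈ B
      · simp only [h, if_true, Set.mem_preimage, Set.mem_setOf_eq]
        constructor
        · intro ht
          have := ht (Fin.last n)
          simpa using this
        · intro ht i
          induction i using Fin.lastCases with
          | last => simpa using ht
          | cast i => simpa using h i
      · simp only [h, if_false, Set.mem_preimage, Set.mem_setOf_eq, Set.mem_empty_iff_false,
          iff_false]
        intro ht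
        apply h
        intro i
        have := ht i.castSucc
        simpa using this
    have hval : ∀ x : Fin n → X,
        ((μ + ∑ i, Measure.dirac (x i)).map (Fin.snoc (α := fun _ => X) x)) {y | ∀ i, y i ∈ B}
          = Set.indicator {x : Fin n → X | ∀ i, x i ∈ B} (fun _ => μ B + n) x := by
      intro x
      rw [Measure.map_apply (hsnoc x) (hSm (n+1)), hpre x]
      by_cases h : ∀ i, x i ∈ B
      · simp only [h, if_true]
        rw [Set.indicator_of_mem (show x ∈ {x : Fin n → X | ∀ i, x i ∈ B} from h)]
        simp only [Measure.add_apply, Measure.finset_sum_apply]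
        have : ∀ i : Fin n, Measure.dirac (x i) B = 1 := fun i =>
          Measure.dirac_apply_of_mem (h i)
        simp [this]
      · simp only [h, if_false]
        rw [Set.indicator_of_notMem (show x ∉ {x : Fin n → X | ∀ i, x i ∈ B} from h)]
        simp
    simp only [hval]
    rw [lintegral_indicator (hSm n) _, setLIntegral_const, ih, Finset.prod_range_succ]
    ring
end

section
/- Let μ be a σ-finite measure on X and let m, n ∈ ℕ. For every measurable set B ⊆ X^{n+m}, the measure μ^[n+m] satisfies the recursion μ^[n+m](B) = ∫∫ 1_B(x₁,…,x_{n+m}) (μ+δ_{x₁}+⋯+δ_{x_m})^[n](d(x_{m+1},…,x_{m+n})) μ^[m](d(x₁,…,x_m)). -/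
open MeasureTheory ProbabilityTheory Filter
open scoped ENNReal Classical

section AuxForStatement2

variable {X : Type*} [MeasurableSpace X]

lemma seqM_zero (ν : Measure X) : seqM ν 0 = Measure.dirac (fun i => i.elim0) := by
  rw [seqM]

lemma seqM_succ_def (ν : Measure X) (k : ℕ) : seqM ν (k+1) = (seqM ν k).bind
    (fun x => (ν + ∑ i, Measure.dirac (x i)).map (Fin.snoc x)) := by
  rw [seqM]

lemma measurable_snocP {n : ℕ} :
    Measurable (fun p : (Fin n → X) × X => (Fin.snoc p.1 p.2 : Fin (n+1) → X)) := by
  refine measurable_pi_iff.mpr fun i => ?_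
  induction i using Fin.lastCases with
  | last => simpa using measurable_snd
  | cast i => simpa [Function.comp_def] using (measurable_pi_apply i).comp measurable_fst

lemma measurable_appendP {m n : ℕ} :
    Measurable (fun p : (Fin m → X) × (Fin n → X) => Fin.append p.1 p.2) := by
  refine measurable_pi_iff.mpr fun i => ?_
  refine Fin.addCases (fun i => ?_) (fun i => ?_) i
  · simpa only [Fin.append_left, Function.comp_def] using (measurable_pi_apply i).comp measurable_fst
  · simpa only [Fin.append_right, Function.comp_def] using (measurable_pi_apply i).comp measurable_snd

lemma measurable_snoc1 {n : ℕ} (z : Fin n → X) :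
    Measurable (fun t => (Fin.snoc z t : Fin (n+1) → X)) :=
  measurable_snocP.comp (measurable_const.prodMk measurable_id)

lemma measurable_helper {μ : Measure X} [SigmaFinite μ] {k : ℕ}
    {f : (Fin k → X) × X → ℝ≥0∞} (hf : Measurable f) :
    Measurable (fun w : Fin k → X => ∫⁻ t, f (w, t) ∂(μ + ∑ i, Measure.dirac (w i))) := by
  have heq : (fun w : Fin k → X => ∫⁻ t, f (w, t) ∂(μ + ∑ i, Measure.dirac (w i)))
      = fun w => (∫⁻ t, f (w, t) ∂μ) + ∑ i, f (w, w i) := by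
    funext w
    rw [lintegral_add_measure, lintegral_finset_sum_measure]
    congr 1
    exact Finset.sum_congr rfl fun i _ =>
      lintegral_dirac' _ (hf.comp measurable_prodMk_left)
  rw [heq]
  exact hf.lintegral_prod_right'.add <| Finset.measurable_sum _ fun i _ =>
    hf.comp (measurable_id.prodMk (measurable_pi_apply i))

lemma measurable_seqM_kernel {μ : Measure X} [SigmaFinite μ] {k : ℕ} :
    Measurable (fun w : Fin k → X =>
      (μ + ∑ i, Measure.dirac (w i)).map (fun t => (Fin.snoc w t : Fin (k+1) → X))) := by
  refine Measure.measurable_of_measurable_coe _ fun s hs => ?_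
  have h : ∀ w : Fin k → X, (μ + ∑ i, Measure.dirac (w i)).map
        (fun t => (Fin.snoc w t : Fin (k+1) → X)) s
      = ∫⁻ t, s.indicator 1 (Fin.snoc w t) ∂(μ + ∑ i, Measure.dirac (w i)) := by
    intro w
    rw [Measure.map_apply (measurable_snoc1 w) hs]
    rw [← lintegral_indicator_one (measurable_snoc1 w hs)]
    exact lintegral_congr fun t => rfl
  simp only [h]
  exact measurable_helper ((measurable_one.indicator hs).comp measurable_snocP)

lemma seqM_succ_lintegral (ν : Measure X) [SigmaFinite ν] (k : ℕ)
    (g : (Fin (k+1) → X) → ℝ≥0∞) (hg : Measurable g) :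
    ∫⁻ w, g w ∂ seqM ν (k+1)
      = ∫⁻ z, ∫⁻ t, g (Fin.snoc z t) ∂(ν + ∑ i, Measure.dirac (z i)) ∂ seqM ν k := by
  rw [seqM_succ_def, Measure.lintegral_bind measurable_seqM_kernel.aemeasurable hg.aemeasurable]
  refine lintegral_congr fun z => ?_
  rw [lintegral_map hg (measurable_snoc1 z)]

lemma append_zero_eq {m : ℕ} (x : Fin m → X) :
    Fin.append x (fun i : Fin 0 => i.elim0) = x := by
  funext i
  show Fin.append x Fin.elim0 i = x i
  rw [Fin.append_elim0]
  exact congrArg x (Fin.ext rfl)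

lemma seqM_lintegral (μ : Measure X) [SigmaFinite μ] (m : ℕ) (n : ℕ) :
    ∀ (f : (Fin (m + n) → X) → ℝ≥0∞), Measurable f →
    ∫⁻ w, f w ∂ seqM μ (m + n)
      = ∫⁻ x, ∫⁻ y, f (Fin.append x y)
          ∂ seqM (μ + ∑ i, Measure.dirac (x i)) n ∂ seqM μ m := by
  induction n with
  | zero =>
    intro f hf
    have h : ∀ x : Fin m → X,
        ∫⁻ y, f (Fin.append x y) ∂ seqM (μ + ∑ i, Measure.dirac (x i)) 0 = f x := by
      intro x
      rw [seqM_zero]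
      have h2 : (fun y : Fin 0 → X => f (Fin.append x y)) = fun _ => f x := by
        funext y
        have hy : y = fun i : Fin 0 => i.elim0 := funext fun i => i.elim0
        rw [hy, append_zero_eq]
      rw [h2, lintegral_const]
      simp
    simp only [h]
    rfl
  | succ n ih =>
    intro f hf
    have key : ∀ (x : Fin m → X) (y : Fin n → X),
        μ + ∑ i, Measure.dirac (Fin.append x y i)
          = (μ + ∑ i, Measure.dirac (x i)) + ∑ i, Measure.dirac (y i) := by
      intro x y
      rw [Fin.sum_univ_add]
      simp only [Fin.append_left, Fin.append_right, add_assoc]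
    calc ∫⁻ w, f w ∂ seqM μ (m + (n+1))
        = ∫⁻ z, ∫⁻ t, f (Fin.snoc z t) ∂(μ + ∑ i, Measure.dirac (z i))
            ∂ seqM μ (m+n) := seqM_succ_lintegral μ (m+n) f hf
      _ = ∫⁻ x, ∫⁻ y, ∫⁻ t, f (Fin.snoc (Fin.append x y) t)
            ∂(μ + ∑ i, Measure.dirac (Fin.append x y i))
            ∂ seqM (μ + ∑ i, Measure.dirac (x i)) n ∂ seqM μ m :=
          ih (fun z => ∫⁻ t, f (Fin.snoc z t) ∂(μ + ∑ i, Measure.dirac (z i)))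
            (measurable_helper (hf.comp measurable_snocP))
      _ = ∫⁻ x, ∫⁻ y, f (Fin.append x y)
            ∂ seqM (μ + ∑ i, Measure.dirac (x i)) (n+1) ∂ seqM μ m := by
          refine lintegral_congr fun x => ?_
          rw [seqM_succ_lintegral (μ + ∑ i, Measure.dirac (x i)) n
            (fun y => f (Fin.append x y))
            (hf.comp (measurable_appendP.comp (measurable_const.prodMk measurable_id)))]
          refine lintegral_congr fun y => ?_
          rw [key]
          refine lintegral_congr fun t => ?_
          exact (congrArg f (Fin.append_snoc x y t)).symm

end AuxForStatement2

theorem statement2 {X : Type*} [MeasurableSpace X] (μ : MeasureTheory.Measure X)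
    [MeasureTheory.SigmaFinite μ] (m n : ℕ) (B : Set (Fin (m + n) → X))
    (hB : MeasurableSet B) :
    seqM μ (m + n) B
      = ∫⁻ x, seqM (μ + ∑ i, MeasureTheory.Measure.dirac (x i)) n
          {y | Fin.append x y ∈ B} ∂ seqM μ m := by
  rw [← lintegral_indicator_one hB]
  rw [seqM_lintegral μ m n _ (measurable_one.indicator hB)]
  refine lintegral_congr fun x => ?_
  rw [← lintegral_indicator_one (s := {y | Fin.append x y ∈ B})
    ((measurable_appendP.comp (measurable_const.prodMk measurable_id)) hB)]
  exact lintegral_congr fun y => rfl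
end
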